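/- Let a, b, c be integers with a > b ≥ 0 and c ≥ 0. Then in ℤ[v, v⁻¹] one has ∑_{k=0}^{c} (−1)^{c−k} v^{−k(b+c)} [a−b−1+c−k choose a−b−1] [a+c choose k] = v^{−c(a+c)} [b+c choose c]. -/

import Mathlib

open LaurentPolynomial

/-- The Gaussian polynomial `⟦N choose t⟧`, an element of `ℤ[v, v⁻¹]` (here `v = T 1`),
defined via the `q`-Pascal recursion (with `q = v²`):
`⟦N choose 0⟧ = 1`, `⟦0 choose t+1⟧ = 0`,
`⟦N+1 choose t+1⟧ = ⟦N choose t⟧ + v^{2(t+1)} ⟦N choose t+1⟧`.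
It equals the product `∏_{i=1}^{t} (v^{2(N−i+1)} − 1)/(v^{2i} − 1)` when `t ≤ N`,
and vanishes when `t > N`. -/
noncomputable def gaussPoly : ℕ → ℕ → LaurentPolynomial ℤ
  | _, 0 => 1
  | 0, _ + 1 => 0
  | N + 1, t + 1 => gaussPoly N t + T (2 * ((t : ℤ) + 1)) * gaussPoly N (t + 1)

/-- The symmetric Gaussian polynomial `[N choose t] = v^{−t(N−t)} ⟦N choose t⟧`. -/
noncomputable def sgauss (N t : ℕ) : LaurentPolynomial ℤ :=
  T (-((t : ℤ) * ((N : ℤ) - (t : ℤ)))) * gaussPoly N t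

/-- The bar involution on `ℤ[v, v⁻¹]`: the ring automorphism fixing `ℤ` and sending
`v ↦ v⁻¹` (substitution `T ↦ T⁻¹`). -/
noncomputable def bar (p : LaurentPolynomial ℤ) : LaurentPolynomial ℤ :=
  LaurentPolynomial.invert p

/-- `p ∈ v⁻¹ℤ[v⁻¹]`: every monomial `v^m` occurring in `p` with nonzero coefficient has
`m ≤ −1`. -/
def InNegPart (p : LaurentPolynomial ℤ) : Prop :=
  ∀ m : ℤ, p.coeff m ≠ 0 → m < 0

namespace gaussPoly

@[simp] lemma zero_right (N : ℕ) : gaussPoly N 0 = 1 := by cases N <;> rfl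

lemma pascal (N t : ℕ) :
    gaussPoly (N + 1) (t + 1)
      = gaussPoly N t + T (2 * ((t : ℤ) + 1)) * gaussPoly N (t + 1) := rfl

lemma eq_zero_of_lt : ∀ {N t : ℕ}, N < t → gaussPoly N t = 0
  | _, 0, h => absurd h (by omega)
  | 0, _ + 1, _ => rfl
  | N + 1, t + 1, h => by
    rw [pascal, eq_zero_of_lt (by omega : N < t),
      eq_zero_of_lt (by omega : N < t + 1), mul_zero, add_zero]

@[simp] lemma diag : ∀ N : ℕ, gaussPoly N N = 1
  | 0 => rfl
  | N + 1 => by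
    rw [pascal, diag N, eq_zero_of_lt (by omega), mul_zero, add_zero]

lemma absorb : ∀ N t : ℕ,
    (T (2 * ((t : ℤ) + 1)) - 1) * gaussPoly N (t + 1)
      = (T (2 * ((N : ℤ) - (t : ℤ))) - 1) * gaussPoly N t
  | 0, 0 => by simp [gaussPoly]
  | 0, t + 1 => by
    rw [eq_zero_of_lt (by omega : 0 < t + 1), eq_zero_of_lt (by omega : 0 < t + 1 + 1)]
    ring
  | N + 1, 0 => by
    have h := absorb N 0
    rw [pascal]
    push_cast at h ⊢
    simp only [zero_right] at h ⊢
    have e : (2 * ((N:ℤ) + 1 - 0)) = 2 + 2 * ((N:ℤ) - 0) := by ring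
    rw [e, T_add]
    linear_combination (T (2:ℤ)) * h
  | N + 1, t + 1 => by
    have h1 := absorb N (t + 1)
    have h2 := absorb N t
    rw [pascal, pascal]
    push_cast at h1 h2 ⊢
    have e1 : (2 * ((N:ℤ) + 1 - (t + 1))) = 2 * ((N:ℤ) - t) := by ring
    rw [e1]
    have e2 : (2 * ((N:ℤ) + 1)) = 2*((t:ℤ)+1+1) + (2 * ((N:ℤ) - (t+1))) := by ring
    have e3 : (2 * ((N:ℤ) + 1)) = 2*((t:ℤ)+1) + (2 * ((N:ℤ) - t)) := by ring
    -- goal: (T (2*(t+1+1)) - 1) * (G N (t+1) + T (2*(t+1+1)) * G N (t+2))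
    --     = (T (2*(N-t)) - 1) * (G N t + T (2*(t+1)) * G N (t+1))
    have hv : T (2*((t:ℤ)+1+1)) * ((T (2 * ((N:ℤ) - (t+1))) - 1) * gaussPoly N (t+1))
        = (T (2*((N:ℤ)+1)) - T (2*((t:ℤ)+1+1))) * gaussPoly N (t+1) := by
      rw [e2, T_add]; ring
    have hw : T (2*((t:ℤ)+1)) * ((T (2 * ((N:ℤ) - t)) - 1) * gaussPoly N (t+1))
        = (T (2*((N:ℤ)+1)) - T (2*((t:ℤ)+1))) * gaussPoly N (t+1) := by
      rw [e3, T_add]; ring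
    linear_combination (T (2*((t:ℤ)+1+1))) * h1 + h2 + hv - hw

lemma pascal' (N t : ℕ) :
    gaussPoly (N + 1) (t + 1)
      = T (2 * ((N : ℤ) - (t : ℤ))) * gaussPoly N t + gaussPoly N (t + 1) := by
  have h := absorb N t
  rw [pascal]
  linear_combination h

lemma symm : ∀ N t : ℕ, t ≤ N → gaussPoly N (N - t) = gaussPoly N t
  | 0, 0, _ => rfl
  | N + 1, 0, _ => by simp
  | N + 1, t + 1, h => by
    rcases Nat.eq_or_lt_of_le h with h' | h'
    · rw [h']; simp
    · have ht : t + 1 ≤ N := by omega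
      have e : N + 1 - (t + 1) = (N - (t+1)) + 1 := by omega
      rw [e, pascal', pascal]
      have c1 : ((N:ℤ) - ((N - (t+1) : ℕ) : ℤ)) = (t:ℤ) + 1 := by
        have : ((N - (t+1) : ℕ) : ℤ) = (N:ℤ) - (t+1) := by push_cast [ht]; ring
        rw [this]; ring
      rw [c1, symm N (t+1) ht]
      have e2 : (N - (t+1)) + 1 = N - t := by omega
      rw [e2, symm N t (by omega)]
      ring

end gaussPoly

namespace gaussPoly

open Finset in
lemma alt_sum (m : ℕ) :
    ∑ j ∈ Finset.range (m + 2),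
      ((-1) ^ j : LaurentPolynomial ℤ) * T ((j : ℤ) * ((j : ℤ) - 1)) * gaussPoly (m + 1) (m + 1 - j)
      = 0 := by
  rw [Finset.sum_range_succ]
  have step : ∀ j ∈ Finset.range (m + 1),
      ((-1) ^ j : LaurentPolynomial ℤ) * T ((j : ℤ) * ((j : ℤ) - 1)) * gaussPoly (m + 1) (m + 1 - j)
      = ((-1) ^ j : LaurentPolynomial ℤ) * T ((j : ℤ) * ((j : ℤ) + 1)) * gaussPoly m (m - j)
        + ((-1) ^ j : LaurentPolynomial ℤ) * T ((j : ℤ) * ((j : ℤ) - 1)) * gaussPoly m (m + 1 - j) := by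
    intro j hj
    have hj' : j ≤ m := by simpa using Nat.lt_succ_iff.mp (Finset.mem_range.mp hj)
    have e : m + 1 - j = (m - j) + 1 := by omega
    rw [e, pascal']
    have c1 : (2 * ((m : ℤ) - ((m - j : ℕ) : ℤ))) = 2 * (j : ℤ) := by
      push_cast [hj']; ring
    rw [c1]
    have c2 : (j : ℤ) * ((j : ℤ) + 1) = (j : ℤ) * ((j : ℤ) - 1) + 2 * (j : ℤ) := by ring
    rw [c2, T_add]
    ring
  rw [Finset.sum_congr rfl step, Finset.sum_add_distrib, Finset.sum_range_succ
    (fun j => ((-1) ^ j : LaurentPolynomial ℤ) * T ((j : ℤ) * ((j : ℤ) + 1)) * gaussPoly m (m - j)),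
    Finset.sum_range_succ'
    (fun j => ((-1) ^ j : LaurentPolynomial ℤ) * T ((j : ℤ) * ((j : ℤ) - 1)) * gaussPoly m (m + 1 - j))]
  have shift : ∀ i ∈ Finset.range m,
      ((-1) ^ (i+1) : LaurentPolynomial ℤ) * T (((i+1 : ℕ) : ℤ) * (((i+1 : ℕ) : ℤ) - 1)) * gaussPoly m (m + 1 - (i+1))
      = -(((-1) ^ i : LaurentPolynomial ℤ) * T ((i : ℤ) * ((i : ℤ) + 1)) * gaussPoly m (m - i)) := by
    intro i _
    have e : m + 1 - (i + 1) = m - i := by omega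
    have c : (((i+1 : ℕ) : ℤ)) * (((i+1 : ℕ) : ℤ) - 1) = (i : ℤ) * ((i : ℤ) + 1) := by
      push_cast; ring
    rw [e, c, pow_succ]
    ring
  rw [Finset.sum_congr rfl shift, Finset.sum_neg_distrib]
  have z1 : gaussPoly m (m + 1 - 0) = 0 := eq_zero_of_lt (by omega)
  have z2 : gaussPoly (m + 1) (m + 1 - (m + 1)) = gaussPoly (m+1) 0 := by
    norm_num
  have z3 : gaussPoly m (m - m) = 1 := by simp
  rw [z1, z2, zero_right, z3]
  have c3 : (((m+1 : ℕ) : ℤ)) * (((m+1 : ℕ) : ℤ) - 1) = (m : ℤ) * ((m : ℤ) + 1) := by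
    push_cast; ring
  rw [c3, pow_succ]
  ring

end gaussPoly

namespace gaussPoly

lemma orth : ∀ d m : ℕ,
    ∑ j ∈ Finset.range (m + 2),
      ((-1) ^ j : LaurentPolynomial ℤ) * T ((j : ℤ) * ((j : ℤ) - 1)) *
        gaussPoly (d + j) j * gaussPoly (d + m + 1) (m + 1 - j) = 0
  | 0, m => by
    have := alt_sum m
    rw [← this]
    refine Finset.sum_congr rfl fun j hj => ?_
    rw [Nat.zero_add, Nat.zero_add, diag, mul_one]
  | d + 1, m => by
    have ih := orth d m
    rw [Finset.sum_range_succ]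
    have step1 : ∀ j ∈ Finset.range (m + 1),
        ((-1) ^ j : LaurentPolynomial ℤ) * T ((j : ℤ) * ((j : ℤ) - 1)) *
          gaussPoly (d + 1 + j) j * gaussPoly (d + 1 + m + 1) (m + 1 - j)
        = ((-1) ^ j : LaurentPolynomial ℤ) * T ((j : ℤ) * ((j : ℤ) + 1) + 2 * ((d : ℤ) + 1)) *
            gaussPoly (d + 1 + j) j * gaussPoly (d + 1 + m) (m - j)
          + ((-1) ^ j : LaurentPolynomial ℤ) * T ((j : ℤ) * ((j : ℤ) - 1)) *
            gaussPoly (d + 1 + j) j * gaussPoly (d + 1 + m) (m + 1 - j) := by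
      intro j hj
      have hj' : j ≤ m := by have := Finset.mem_range.mp hj; omega
      have e : m + 1 - j = (m - j) + 1 := by omega
      rw [e, pascal']
      have c1 : (2 * (((d + 1 + m : ℕ) : ℤ) - ((m - j : ℕ) : ℤ)))
          = 2 * ((j : ℤ) + ((d : ℤ) + 1)) := by push_cast [hj']; ring
      rw [c1]
      have c2 : (j : ℤ) * ((j : ℤ) + 1) + 2 * ((d : ℤ) + 1)
          = (j : ℤ) * ((j : ℤ) - 1) + 2 * ((j : ℤ) + ((d : ℤ) + 1)) := by ring
      rw [c2, T_add]
      ring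
    rw [Finset.sum_congr rfl step1, Finset.sum_add_distrib, Finset.sum_range_succ
      (fun j => ((-1) ^ j : LaurentPolynomial ℤ) * T ((j : ℤ) * ((j : ℤ) + 1) + 2 * ((d : ℤ) + 1)) *
            gaussPoly (d + 1 + j) j * gaussPoly (d + 1 + m) (m - j)),
      Finset.sum_range_succ'
      (fun j => ((-1) ^ j : LaurentPolynomial ℤ) * T ((j : ℤ) * ((j : ℤ) - 1)) *
            gaussPoly (d + 1 + j) j * gaussPoly (d + 1 + m) (m + 1 - j))]
    -- combine the two range-m sums into shifted d-level summands
    have combined : ∀ i ∈ Finset.range m,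
        (((-1) ^ i : LaurentPolynomial ℤ) * T ((i : ℤ) * ((i : ℤ) + 1) + 2 * ((d : ℤ) + 1)) *
            gaussPoly (d + 1 + i) i * gaussPoly (d + 1 + m) (m - i))
          + (((-1) ^ (i+1) : LaurentPolynomial ℤ) * T (((i+1 : ℕ) : ℤ) * (((i+1 : ℕ) : ℤ) - 1)) *
            gaussPoly (d + 1 + (i+1)) (i+1) * gaussPoly (d + 1 + m) (m + 1 - (i+1)))
        = ((-1) ^ (i+1) : LaurentPolynomial ℤ) * T (((i+1 : ℕ) : ℤ) * (((i+1 : ℕ) : ℤ) - 1)) *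
            gaussPoly (d + (i+1)) (i+1) * gaussPoly (d + m + 1) (m + 1 - (i+1)) := by
      intro i _
      have hp := pascal' (d + 1 + i) i
      have c1 : (2 * (((d + 1 + i : ℕ) : ℤ) - ((i : ℕ) : ℤ))) = 2 * ((d : ℤ) + 1) := by
        push_cast; ring
      rw [c1] at hp
      have e1 : d + 1 + (i + 1) = (d + 1 + i) + 1 := by omega
      have e2 : d + (i + 1) = d + 1 + i := by omega
      have e3 : m + 1 - (i + 1) = m - i := by omega
      have e4 : d + m + 1 = d + 1 + m := by omega
      rw [e1, e2, e3, e4, hp]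
      have c2 : ((i : ℤ) * ((i : ℤ) + 1) + 2 * ((d : ℤ) + 1))
          = (((i+1 : ℕ) : ℤ) * (((i+1 : ℕ) : ℤ) - 1)) + 2 * ((d : ℤ) + 1) := by push_cast; ring
      rw [c2, T_add, pow_succ]
      ring
    have hsum : (∑ i ∈ Finset.range m,
          ((-1) ^ i : LaurentPolynomial ℤ) * T ((i : ℤ) * ((i : ℤ) + 1) + 2 * ((d : ℤ) + 1)) *
            gaussPoly (d + 1 + i) i * gaussPoly (d + 1 + m) (m - i))
        + (∑ i ∈ Finset.range m,
          ((-1) ^ (i+1) : LaurentPolynomial ℤ) * T (((i+1 : ℕ) : ℤ) * (((i+1 : ℕ) : ℤ) - 1)) *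
            gaussPoly (d + 1 + (i+1)) (i+1) * gaussPoly (d + 1 + m) (m + 1 - (i+1)))
        = ∑ i ∈ Finset.range m,
          ((-1) ^ (i+1) : LaurentPolynomial ℤ) * T (((i+1 : ℕ) : ℤ) * (((i+1 : ℕ) : ℤ) - 1)) *
            gaussPoly (d + (i+1)) (i+1) * gaussPoly (d + m + 1) (m + 1 - (i+1)) := by
      rw [← Finset.sum_add_distrib]
      exact Finset.sum_congr rfl combined
    rw [Finset.sum_range_succ', Finset.sum_range_succ] at ih
    simp only [Nat.sub_self, Nat.sub_zero, Nat.add_zero, zero_right, pow_zero, one_mul,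
      mul_one, Nat.cast_zero, zero_mul, T_zero] at ih ⊢
    have hfin : ((-1) ^ m : LaurentPolynomial ℤ) * T ((m : ℤ) * ((m : ℤ) + 1) + 2 * ((d : ℤ) + 1)) *
            gaussPoly (d + 1 + m) m
          + gaussPoly (d + 1 + m) (m + 1)
          + ((-1) ^ (m+1) : LaurentPolynomial ℤ) * T (((m+1 : ℕ) : ℤ) * (((m+1 : ℕ) : ℤ) - 1)) *
            gaussPoly (d + 1 + (m+1)) (m+1)
          - ((-1) ^ (m+1) : LaurentPolynomial ℤ) * T (((m+1 : ℕ) : ℤ) * (((m+1 : ℕ) : ℤ) - 1)) *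
            gaussPoly (d + (m+1)) (m+1)
          - gaussPoly (d + m + 1) (m + 1) = 0 := by
      have hp := pascal' (d + 1 + m) m
      have c1 : (2 * (((d + 1 + m : ℕ) : ℤ) - ((m : ℕ) : ℤ))) = 2 * ((d : ℤ) + 1) := by
        push_cast; ring
      rw [c1] at hp
      have e1 : d + 1 + (m + 1) = (d + 1 + m) + 1 := by omega
      have e2 : d + (m + 1) = d + m + 1 := by omega
      have e3 : d + m + 1 = d + 1 + m := by omega
      rw [e1, e2, e3, hp]
      have c2 : ((m : ℤ) * ((m : ℤ) + 1) + 2 * ((d : ℤ) + 1))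
          = (((m+1 : ℕ) : ℤ) * (((m+1 : ℕ) : ℤ) - 1)) + 2 * ((d : ℤ) + 1) := by push_cast; ring
      rw [c2, T_add, pow_succ]
      ring
    linear_combination hsum + ih + hfin

end gaussPoly

namespace gaussPoly

lemma main_step (b c d : ℕ)
    (hS : ∑ j ∈ Finset.range (c + 1),
        ((-1) ^ j : LaurentPolynomial ℤ) * T (2 * (j : ℤ) * (b : ℤ) + (j : ℤ) * ((j : ℤ) + 1)) *
          gaussPoly (d + j) d * gaussPoly (b + d + 1 + c) (c - j) = gaussPoly (b + c) c)
    (hB : ∑ j ∈ Finset.range (c + 2),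
        ((-1) ^ j : LaurentPolynomial ℤ) * T (2 * (j : ℤ) * ((b : ℤ) - 1) + (j : ℤ) * ((j : ℤ) + 1)) *
          gaussPoly (d + j) d * gaussPoly (b + d + 1 + c) (c + 1 - j) = gaussPoly (b + c) (c + 1)) :
    ∑ j ∈ Finset.range (c + 2),
        ((-1) ^ j : LaurentPolynomial ℤ) * T (2 * (j : ℤ) * (b : ℤ) + (j : ℤ) * ((j : ℤ) + 1)) *
          gaussPoly (d + j) d * gaussPoly (b + d + 1 + c + 1) (c + 1 - j)
      = gaussPoly (b + c + 1) (c + 1) := by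
  rw [Finset.sum_range_succ] at hB
  rw [Finset.sum_range_succ]
  have step1 : ∀ j ∈ Finset.range (c + 1),
      ((-1) ^ j : LaurentPolynomial ℤ) * T (2 * (j : ℤ) * (b : ℤ) + (j : ℤ) * ((j : ℤ) + 1)) *
          gaussPoly (d + j) d * gaussPoly (b + d + 1 + c + 1) (c + 1 - j)
      = ((-1) ^ j : LaurentPolynomial ℤ) * T (2 * (j : ℤ) * (b : ℤ) + (j : ℤ) * ((j : ℤ) + 1)) *
          gaussPoly (d + j) d * gaussPoly (b + d + 1 + c) (c - j)
        + T (2 * ((c : ℤ) + 1)) *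
          (((-1) ^ j : LaurentPolynomial ℤ) * T (2 * (j : ℤ) * ((b : ℤ) - 1) + (j : ℤ) * ((j : ℤ) + 1)) *
            gaussPoly (d + j) d * gaussPoly (b + d + 1 + c) (c + 1 - j)) := by
    intro j hj
    have hj' : j ≤ c := by have := Finset.mem_range.mp hj; omega
    have e : c + 1 - j = (c - j) + 1 := by omega
    have hp := pascal (b + d + 1 + c) (c - j)
    have c2 : (2 * (((c - j : ℕ) : ℤ) + 1)) = 2 * ((c : ℤ) - (j : ℤ) + 1) := by
      push_cast [hj']; ring
    rw [c2] at hp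
    rw [e, hp]
    have t1 : (T (2 * (j : ℤ) * (b : ℤ) + (j : ℤ) * ((j : ℤ) + 1)) : LaurentPolynomial ℤ) * T (2 * ((c : ℤ) - (j : ℤ) + 1))
        = T (2 * ((c : ℤ) + 1)) * T (2 * (j : ℤ) * ((b : ℤ) - 1) + (j : ℤ) * ((j : ℤ) + 1)) := by
      rw [← T_add, ← T_add]; congr 1; ring
    linear_combination (((-1) ^ j : LaurentPolynomial ℤ) * gaussPoly (d + j) d *
      gaussPoly (b + d + 1 + c) ((c - j) + 1)) * t1
  rw [Finset.sum_congr rfl step1, Finset.sum_add_distrib, ← Finset.mul_sum, hS, pascal (b + c) c]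
  simp only [Nat.sub_self, zero_right, mul_one] at hB ⊢
  have t2 : (T (2 * ((c + 1 : ℕ) : ℤ) * (b : ℤ) + ((c + 1 : ℕ) : ℤ) * (((c + 1 : ℕ) : ℤ) + 1)) : LaurentPolynomial ℤ)
      = T (2 * ((c : ℤ) + 1)) *
        T (2 * ((c + 1 : ℕ) : ℤ) * ((b : ℤ) - 1) + ((c + 1 : ℕ) : ℤ) * (((c + 1 : ℕ) : ℤ) + 1)) := by
    rw [← T_add]; congr 1; push_cast; ring
  linear_combination T (2 * ((c : ℤ) + 1)) * hB +
    (((-1) ^ (c + 1) : LaurentPolynomial ℤ) * gaussPoly (d + (c + 1)) d) * t2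

end gaussPoly

namespace gaussPoly

lemma main : ∀ b : ℕ, ∀ c d : ℕ,
    ∑ j ∈ Finset.range (c + 1),
      ((-1) ^ j : LaurentPolynomial ℤ) * T (2 * (j : ℤ) * (b : ℤ) + (j : ℤ) * ((j : ℤ) + 1)) *
        gaussPoly (d + j) d * gaussPoly (b + d + 1 + c) (c - j) = gaussPoly (b + c) c := by
  intro b
  induction b with
  | zero =>
    intro c
    induction c with
    | zero =>
      intro d
      rw [Finset.sum_range_one]
      norm_num
    | succ c ihc =>
      intro d
      have hB : ∑ j ∈ Finset.range (c + 2),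
          ((-1) ^ j : LaurentPolynomial ℤ) *
            T (2 * (j : ℤ) * ((0 : ℤ) - 1) + (j : ℤ) * ((j : ℤ) + 1)) *
            gaussPoly (d + j) d * gaussPoly (0 + d + 1 + c) (c + 1 - j)
          = gaussPoly (0 + c) (c + 1) := by
        have horth := orth d c
        have congr1 : ∀ j ∈ Finset.range (c + 2),
            ((-1) ^ j : LaurentPolynomial ℤ) *
              T (2 * (j : ℤ) * ((0 : ℤ) - 1) + (j : ℤ) * ((j : ℤ) + 1)) *
              gaussPoly (d + j) d * gaussPoly (0 + d + 1 + c) (c + 1 - j)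
            = ((-1) ^ j : LaurentPolynomial ℤ) * T ((j : ℤ) * ((j : ℤ) - 1)) *
              gaussPoly (d + j) j * gaussPoly (d + c + 1) (c + 1 - j) := by
          intro j _
          have e1 : 0 + d + 1 + c = d + c + 1 := by omega
          have e2 : 2 * (j : ℤ) * ((0 : ℤ) - 1) + (j : ℤ) * ((j : ℤ) + 1)
              = (j : ℤ) * ((j : ℤ) - 1) := by ring
          have e3 : gaussPoly (d + j) d = gaussPoly (d + j) j := by
            have h := symm (d + j) j (by omega)
            have e : d + j - j = d := by omega
            rw [e] at h
            exact h
          rw [e1, e2, e3]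
        rw [Finset.sum_congr rfl congr1, horth]
        rw [eq_zero_of_lt (show (0 + c : ℕ) < c + 1 by omega)]
      have h := main_step 0 c d (ihc d) hB
      have e4 : 0 + d + 1 + (c + 1) = 0 + d + 1 + c + 1 := by omega
      have e5 : 0 + (c + 1) = 0 + c + 1 := by omega
      rw [e4, e5]
      exact h
  | succ b ihb =>
    intro c
    induction c with
    | zero =>
      intro d
      rw [Finset.sum_range_one]
      norm_num
    | succ c ihc =>
      intro d
      have hB : ∑ j ∈ Finset.range (c + 2),
          ((-1) ^ j : LaurentPolynomial ℤ) *
            T (2 * (j : ℤ) * (((b + 1 : ℕ) : ℤ) - 1) + (j : ℤ) * ((j : ℤ) + 1)) *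
            gaussPoly (d + j) d * gaussPoly (b + 1 + d + 1 + c) (c + 1 - j)
          = gaussPoly (b + 1 + c) (c + 1) := by
        have h := ihb (c + 1) d
        have congr1 : ∀ j ∈ Finset.range (c + 2),
            ((-1) ^ j : LaurentPolynomial ℤ) *
              T (2 * (j : ℤ) * ((b : ℕ) : ℤ) + (j : ℤ) * ((j : ℤ) + 1)) *
              gaussPoly (d + j) d * gaussPoly (b + d + 1 + (c + 1)) (c + 1 - j)
            = ((-1) ^ j : LaurentPolynomial ℤ) *
              T (2 * (j : ℤ) * (((b + 1 : ℕ) : ℤ) - 1) + (j : ℤ) * ((j : ℤ) + 1)) *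
              gaussPoly (d + j) d * gaussPoly (b + 1 + d + 1 + c) (c + 1 - j) := by
          intro j _
          have e1 : b + d + 1 + (c + 1) = b + 1 + d + 1 + c := by omega
          have e2 : 2 * (j : ℤ) * ((b : ℕ) : ℤ) + (j : ℤ) * ((j : ℤ) + 1)
              = 2 * (j : ℤ) * (((b + 1 : ℕ) : ℤ) - 1) + (j : ℤ) * ((j : ℤ) + 1) := by
            push_cast; ring
          rw [e1, e2]
        rw [Finset.sum_congr rfl congr1] at h
        have e3 : b + (c + 1) = b + 1 + c := by omega
        rw [e3] at h
        exact h
      have h := main_step (b + 1) c d (ihc d) hB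
      have e4 : b + 1 + d + 1 + (c + 1) = b + 1 + d + 1 + c + 1 := by omega
      have e5 : b + 1 + (c + 1) = b + 1 + c + 1 := by omega
      rw [e4, e5]
      exact h

end gaussPoly

/-- For integers `a > b ≥ 0` and `c ≥ 0`, in `ℤ[v, v⁻¹]`:
`∑_{k=0}^{c} (−1)^{c−k} v^{−k(b+c)} [a−b−1+c−k choose a−b−1] [a+c choose k]
  = v^{−c(a+c)} [b+c choose c]`. -/
theorem gauss_alternating_sum_identity' (a b c : ℕ) (hba : b < a) :
    ∑ k ∈ Finset.range (c + 1),
        ((-1) ^ (c - k) : LaurentPolynomial ℤ) * T (-((k : ℤ) * ((b : ℤ) + (c : ℤ)))) *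
          sgauss (a - b - 1 + (c - k)) (a - b - 1) * sgauss (a + c) k
      = T (-((c : ℤ) * ((a : ℤ) + (c : ℤ)))) * sgauss (b + c) c := by
  obtain ⟨d, rfl⟩ : ∃ d, a = b + d + 1 := ⟨a - b - 1, by omega⟩
  have hd : b + d + 1 - b - 1 = d := by omega
  rw [hd]
  rw [← Finset.sum_range_reflect]
  have key : ∀ j ∈ Finset.range (c + 1),
      ((-1) ^ (c - (c + 1 - 1 - j)) : LaurentPolynomial ℤ) *
          T (-(((c + 1 - 1 - j : ℕ) : ℤ) * ((b : ℤ) + (c : ℤ)))) *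
          sgauss (d + (c - (c + 1 - 1 - j))) d * sgauss (b + d + 1 + c) (c + 1 - 1 - j)
      = T (-((c : ℤ) * (2 * (b : ℤ) + (d : ℤ) + (c : ℤ) + 1))) *
        (((-1) ^ j : LaurentPolynomial ℤ) *
          T (2 * (j : ℤ) * (b : ℤ) + (j : ℤ) * ((j : ℤ) + 1)) *
          gaussPoly (d + j) d * gaussPoly (b + d + 1 + c) (c - j)) := by
    intro j hj
    have hj' : j ≤ c := by have := Finset.mem_range.mp hj; omega
    have e1 : c + 1 - 1 - j = c - j := by omega
    have e2 : c - (c - j) = j := by omega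
    rw [e1, e2, sgauss, sgauss]
    have hcj : ((c - j : ℕ) : ℤ) = (c : ℤ) - (j : ℤ) := by omega
    have tt : (T (-(((c - j : ℕ) : ℤ) * ((b : ℤ) + (c : ℤ)))) : LaurentPolynomial ℤ) *
          T (-((d : ℤ) * (((d + j : ℕ) : ℤ) - (d : ℤ)))) *
          T (-(((c - j : ℕ) : ℤ) * (((b + d + 1 + c : ℕ) : ℤ) - ((c - j : ℕ) : ℤ))))
        = T (-((c : ℤ) * (2 * (b : ℤ) + (d : ℤ) + (c : ℤ) + 1))) *
          T (2 * (j : ℤ) * (b : ℤ) + (j : ℤ) * ((j : ℤ) + 1)) := by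
      rw [← T_add, ← T_add, ← T_add]
      congr 1
      rw [hcj]
      push_cast
      ring
    linear_combination (((-1) ^ j : LaurentPolynomial ℤ) * gaussPoly (d + j) d *
      gaussPoly (b + d + 1 + c) (c - j)) * tt
  rw [Finset.sum_congr rfl key, ← Finset.mul_sum, gaussPoly.main b c d, sgauss]
  have hbc : ((b + c : ℕ) : ℤ) - (c : ℤ) = (b : ℤ) := by omega
  have tt2 : (T (-((c : ℤ) * (((b + d + 1 : ℕ) : ℤ) + (c : ℤ)))) : LaurentPolynomial ℤ) *
      T (-((c : ℤ) * (((b + c : ℕ) : ℤ) - (c : ℤ))))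
      = T (-((c : ℤ) * (2 * (b : ℤ) + (d : ℤ) + (c : ℤ) + 1))) := by
    rw [← T_add]
    congr 1
    push_cast
    ring
  linear_combination gaussPoly (b + c) c * tt2.symm
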